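/- (Missing mass, lower tail) Let (p_j)_{j∈ℕ} be nonnegative reals with ∑_j p_j = 1, let n ≥ 1, and let X₁,…,Xₙ be i.i.d. ℕ-valued random variables with P(X_i = j) = p_j. Define the missing mass U_n = ∑_{j∈ℕ} p_j·1{ j ∉ {X₁,…,Xₙ} }, and let C₀ = inf_{0<x<1/2} 2/(x·(1−x)·log(1/x)). Then for every ε > 0, P( U_n < E[U_n] − ε ) ≤ exp(−C₀·n·ε²/4). -/

import Mathlib

open MeasureTheory ProbabilityTheory

section Aux

open Finset

lemma mgf_bound {q c : ℝ} (hq0 : 0 ≤ q) (hq1 : q ≤ 1)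
    (hc : ∀ u, 0 ≤ u → u ≤ q → u * (1 - u) ≤ c) {t : ℝ} (ht : 0 ≤ t) :
    1 - q + q * Real.exp (-t) ≤ Real.exp (-(q * t) + c * t ^ 2 / 2) := by
  have hcnn : 0 ≤ c := by have := hc 0 le_rfl hq0; linarith
  set D : ℝ → ℝ := fun s => 1 - q + q * Real.exp (-s) with hDdef
  have hDpos : ∀ s, 0 < D s := by
    intro s
    rcases eq_or_lt_of_le hq0 with h | h
    · simp [hDdef, ← h]
    · have := Real.exp_pos (-s)
      have : 0 < q * Real.exp (-s) := by positivity
      simp only [hDdef]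
      nlinarith
  have hDderiv : ∀ s : ℝ, HasDerivAt D (-(q * Real.exp (-s))) s := by
    intro s
    have h1 : HasDerivAt (fun s : ℝ => -s) (-1) s := (hasDerivAt_id s).neg
    have h2 : HasDerivAt (fun s : ℝ => Real.exp (-s)) (Real.exp (-s) * (-1)) s :=
      (Real.hasDerivAt_exp (-s)).comp s h1
    have h3 := (h2.const_mul q).const_add (1 - q)
    refine h3.congr_deriv ?_
    ring
  set g : ℝ → ℝ := fun s => -q + c * s + q * (Real.exp (-s) / D s) with hgdef
  set f : ℝ → ℝ := fun s => -(q * s) + c * s ^ 2 / 2 - Real.log (D s) with hfdef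
  have hfderiv : ∀ s : ℝ, HasDerivAt f (g s) s := by
    intro s
    have hlog : HasDerivAt (fun s => Real.log (D s)) (-(q * Real.exp (-s)) / D s) s :=
      (hDderiv s).log (hDpos s).ne'
    have h1 : HasDerivAt (fun s : ℝ => -(q * s)) (-q) s := by
      simpa using ((hasDerivAt_id s).const_mul q).fun_neg
    have h2 : HasDerivAt (fun s : ℝ => c * s ^ 2 / 2) (c * s) s := by
      have := ((hasDerivAt_pow 2 s).const_mul c).div_const 2
      exact this.congr_deriv (by ring)
    have h3 := (h1.add h2).sub hlog
    refine h3.congr_deriv ?_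
    have : -(q * Real.exp (-s)) / D s = -(q * (Real.exp (-s) / D s)) := by ring
    rw [this]
    ring
  have hexp1 : ∀ s : ℝ, HasDerivAt (fun s : ℝ => Real.exp (-s)) (Real.exp (-s) * (-1)) s := by
    intro s
    exact (Real.hasDerivAt_exp (-s)).comp s (hasDerivAt_id s).neg
  have hgderiv : ∀ s : ℝ, HasDerivAt g
      (c + q * ((Real.exp (-s) * (-1) * D s - Real.exp (-s) * (-(q * Real.exp (-s)))) / D s ^ 2)) s := by
    intro s
    have hdiv := (hexp1 s).div (hDderiv s) (hDpos s).ne'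
    have h1 : HasDerivAt (fun s : ℝ => -q + c * s)  c s := by
      simpa using ((hasDerivAt_id s).const_mul c).const_add (-q)
    exact h1.add (hdiv.const_mul q)
  have hg_nonneg : ∀ s, 0 ≤ s → 0 ≤ c + q * ((Real.exp (-s) * (-1) * D s - Real.exp (-s) * (-(q * Real.exp (-s)))) / D s ^ 2) := by
    intro s hs
    set E := Real.exp (-s) with hE
    have hE1 : E ≤ 1 := Real.exp_le_one_iff.mpr (by linarith)
    have hEpos : 0 < E := Real.exp_pos _
    have hD := hDpos s
    set u := q * E / D s with hu
    have hu0 : 0 ≤ u := by positivity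
    have huq : u ≤ q := by
      rw [hu, div_le_iff₀ hD]
      have hds : D s = 1 - q + q * E := rfl
      nlinarith [mul_nonneg hq0 (mul_nonneg (sub_nonneg.2 hq1) (sub_nonneg.2 hE1))]
    have hkey := hc u hu0 huq
    have huval : u * (1 - u) = q * E * (1 - q) / D s ^ 2 := by
      rw [hu]
      have : (1 : ℝ) - q * E / D s = (D s - q * E) / D s := by field_simp
      rw [this]
      have hDE : D s - q * E = 1 - q := by simp [hDdef, hE]
      rw [hDE, div_mul_div_comm, ← sq]
    have : q * ((E * (-1) * D s - E * (-(q * E))) / D s ^ 2) = -(u * (1 - u)) := by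
      rw [huval]
      have hDs : D s = 1 - q + q * E := rfl
      field_simp
      ring
    rw [this]
    linarith
  -- monotonicity of g on [0,∞)
  have hgmono : MonotoneOn g (Set.Ici (0:ℝ)) := by
    apply monotoneOn_of_deriv_nonneg (convex_Ici 0)
    · exact fun x _ => ((hgderiv x).continuousAt).continuousWithinAt
    · exact fun x _ => ((hgderiv x).differentiableAt).differentiableWithinAt
    · intro x hx
      rw [(hgderiv x).deriv]
      exact hg_nonneg x (le_of_lt (by simpa using hx))
  have hg0 : g 0 = 0 := by
    simp [hgdef, hDdef]
  have hgnn : ∀ s, 0 ≤ s → 0 ≤ g s := by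
    intro s hs
    have := hgmono (Set.self_mem_Ici) (Set.mem_Ici.mpr hs) hs
    rw [hg0] at this
    exact this
  have hfmono : MonotoneOn f (Set.Ici (0:ℝ)) := by
    apply monotoneOn_of_deriv_nonneg (convex_Ici 0)
    · exact fun x _ => ((hfderiv x).continuousAt).continuousWithinAt
    · exact fun x _ => ((hfderiv x).differentiableAt).differentiableWithinAt
    · intro x hx
      rw [(hfderiv x).deriv]
      exact hgnn x (le_of_lt (by simpa using hx))
  have hf0 : f 0 = 0 := by
    simp [hfdef, hDdef]
  have hft : 0 ≤ f t := by
    have := hfmono (Set.self_mem_Ici) (Set.mem_Ici.mpr ht) ht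
    rw [hf0] at this
    exact this
  have hlog : Real.log (D t) ≤ -(q * t) + c * t ^ 2 / 2 := by
    simp only [hfdef] at hft
    linarith
  have := (Real.log_le_iff_le_exp (hDpos t)).mp hlog
  simpa [hDdef] using this

lemma stepA (p u : ℕ → ℝ) (hp : ∀ j, 0 ≤ p j) (hu0 : ∀ j, 0 ≤ u j) (hu1 : ∀ j, u j ≤ 1) :
    ∀ S : Finset ℕ, (∑ j ∈ S, p j) ≤ 1 →
    (1 - ∑ j ∈ S, p j) * ∏ j ∈ S, (1 - u j)
      + ∑ k ∈ S, p k * ∏ j ∈ S.erase k, (1 - u j)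
    ≤ ∏ j ∈ S, (1 - u j * (1 - p j)) := by
  intro S
  induction S using Finset.induction_on with
  | empty => simp
  | @insert m S hm IH =>
    intro hσ
    have hσS : ∑ j ∈ S, p j ≤ 1 := by
      have := hp m
      rw [Finset.sum_insert hm] at hσ
      linarith
    have hIH := IH hσS
    set A := ∑ j ∈ S, p j with hA
    set Q := ∏ j ∈ S, (1 - u j) with hQ
    set R := ∏ j ∈ S, (1 - u j * (1 - p j)) with hR
    have hQnn : 0 ≤ Q := Finset.prod_nonneg fun j _ => by have := hu1 j; linarith
    have hRnn : 0 ≤ R := Finset.prod_nonneg fun j _ => by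
      have h1 := hu1 j; have h2 := hu0 j; have h3 := hp j
      nlinarith
    have hQR : Q ≤ R := Finset.prod_le_prod (fun j _ => by have := hu1 j; linarith)
      (fun j _ => by have := hu0 j; have := hp j; nlinarith)
    -- rewrite LHS
    have hsum : ∑ k ∈ insert m S, p k * ∏ j ∈ (insert m S).erase k, (1 - u j)
        = p m * Q + ∑ k ∈ S, p k * ((1 - u m) * ∏ j ∈ S.erase k, (1 - u j)) := by
      rw [Finset.sum_insert hm, Finset.erase_insert hm]
      congr 1
      apply Finset.sum_congr rfl
      intro k hk
      have hkm : k ≠ m := fun h => hm (h ▸ hk)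
      rw [Finset.erase_insert_of_ne hkm.symm]
      rw [Finset.prod_insert (fun h => hm (Finset.mem_of_mem_erase h))]
    rw [Finset.sum_insert hm, Finset.prod_insert hm, Finset.prod_insert hm, hsum]
    have hLHS : (1 - (p m + A)) * ((1 - u m) * Q)
        + (p m * Q + ∑ k ∈ S, p k * ((1 - u m) * ∏ j ∈ S.erase k, (1 - u j)))
        = (1 - u m) * ((1 - A) * Q + ∑ k ∈ S, p k * ∏ j ∈ S.erase k, (1 - u j))
          + u m * p m * Q := by
      have hS2 : ∑ k ∈ S, p k * ((1 - u m) * ∏ j ∈ S.erase k, (1 - u j))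
          = (1 - u m) * ∑ k ∈ S, p k * ∏ j ∈ S.erase k, (1 - u j) := by
        rw [Finset.mul_sum]
        exact Finset.sum_congr rfl fun k _ => by ring
      rw [hS2]
      ring
    rw [hLHS]
    have h1 : (1 - u m) * ((1 - A) * Q + ∑ k ∈ S, p k * ∏ j ∈ S.erase k, (1 - u j))
        ≤ (1 - u m) * R := by
      apply mul_le_mul_of_nonneg_left hIH
      have := hu1 m; linarith
    have h2 : u m * p m * Q ≤ u m * p m * R := by
      apply mul_le_mul_of_nonneg_left hQR
      have := hu0 m; have := hp m; positivity
    calc (1 - u m) * ((1 - A) * Q + ∑ k ∈ S, p k * ∏ j ∈ S.erase k, (1 - u j))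
          + u m * p m * Q
        ≤ (1 - u m) * R + u m * p m * R := by linarith
      _ = (1 - u m * (1 - p m)) * R := by ring

lemma FF_bound (p a : ℕ → ℝ) (hp : ∀ j, 0 ≤ p j) (hp1 : ∀ j, p j ≤ 1)
    (hσ : ∀ S : Finset ℕ, ∑ j ∈ S, p j ≤ 1)
    (ha0 : ∀ j, 0 ≤ a j) (ha1 : ∀ j, a j ≤ 1) :
    ∀ (n : ℕ) (S : Finset ℕ),
      ∑ T ∈ S.powerset, (∏ j ∈ T, (-a j)) * (1 - ∑ j ∈ T, p j) ^ n
      ≤ ∏ j ∈ S, (1 - a j * (1 - p j) ^ n) := by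
  intro n
  induction n with
  | zero =>
    intro S
    have : ∑ T ∈ S.powerset, (∏ j ∈ T, (-a j)) * (1 - ∑ j ∈ T, p j) ^ 0
        = ∏ j ∈ S, (1 - a j) := by
      rw [Finset.prod_congr rfl (fun j _ => by ring : ∀ j ∈ S, 1 - a j = (-a j) + 1)]
      rw [Finset.prod_add]
      exact Finset.sum_congr rfl fun T _ => by simp
    rw [this]
    apply le_of_eq
    exact Finset.prod_congr rfl fun j _ => by simp
  | succ n IH =>
    intro S
    -- recursion identity
    have hrec : ∑ T ∈ S.powerset, (∏ j ∈ T, (-a j)) * (1 - ∑ j ∈ T, p j) ^ (n + 1)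
        = (1 - ∑ j ∈ S, p j) * ∑ T ∈ S.powerset, (∏ j ∈ T, (-a j)) * (1 - ∑ j ∈ T, p j) ^ n
          + ∑ k ∈ S, p k * ∑ T ∈ (S.erase k).powerset, (∏ j ∈ T, (-a j)) * (1 - ∑ j ∈ T, p j) ^ n := by
      have hsplit : ∀ T ∈ S.powerset,
          (∏ j ∈ T, (-a j)) * (1 - ∑ j ∈ T, p j) ^ (n + 1)
          = (1 - ∑ j ∈ S, p j) * ((∏ j ∈ T, (-a j)) * (1 - ∑ j ∈ T, p j) ^ n)
            + ∑ k ∈ S \ T, p k * ((∏ j ∈ T, (-a j)) * (1 - ∑ j ∈ T, p j) ^ n) := by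
        intro T hT
        rw [Finset.mem_powerset] at hT
        have hsd : ∑ k ∈ S \ T, p k = (∑ j ∈ S, p j) - ∑ j ∈ T, p j := by
          rw [eq_sub_iff_add_eq, Finset.sum_sdiff hT]
        rw [← Finset.sum_mul, hsd]
        ring
      rw [Finset.sum_congr rfl hsplit, Finset.sum_add_distrib, ← Finset.mul_sum]
      congr 1
      rw [Finset.sum_comm' (t' := S) (s' := fun k => (S.erase k).powerset)
        (by intro T k
            simp only [Finset.mem_powerset, Finset.mem_sdiff, Finset.subset_erase]
            tauto)]
      apply Finset.sum_congr rfl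
      intro k _
      rw [Finset.mul_sum]
    rw [hrec]
    have h1 : (1 - ∑ j ∈ S, p j) * ∑ T ∈ S.powerset, (∏ j ∈ T, (-a j)) * (1 - ∑ j ∈ T, p j) ^ n
        ≤ (1 - ∑ j ∈ S, p j) * ∏ j ∈ S, (1 - a j * (1 - p j) ^ n) := by
      apply mul_le_mul_of_nonneg_left (IH S)
      have := hσ S; linarith
    have h2 : ∑ k ∈ S, p k * ∑ T ∈ (S.erase k).powerset, (∏ j ∈ T, (-a j)) * (1 - ∑ j ∈ T, p j) ^ n
        ≤ ∑ k ∈ S, p k * ∏ j ∈ S.erase k, (1 - a j * (1 - p j) ^ n) := by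
      apply Finset.sum_le_sum
      intro k _
      exact mul_le_mul_of_nonneg_left (IH _) (hp k)
    have hstep := stepA p (fun j => a j * (1 - p j) ^ n) hp
      (fun j => by
        show (0:ℝ) ≤ a j * (1 - p j) ^ n
        exact mul_nonneg (ha0 j) (pow_nonneg (by linarith [hp1 j]) n))
      (fun j => by
        show a j * (1 - p j) ^ n ≤ 1
        have h1 := hp1 j; have h2 := hp j; have h3 := ha0 j; have h4 := ha1 j
        have hpow : (1 - p j) ^ n ≤ 1 := pow_le_one₀ (by linarith) (by linarith)
        have hpown : 0 ≤ (1 - p j) ^ n := pow_nonneg (by linarith) n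
        nlinarith)
      S (hσ S)
    calc _ ≤ (1 - ∑ j ∈ S, p j) * ∏ j ∈ S, (1 - a j * (1 - p j) ^ n)
          + ∑ k ∈ S, p k * ∏ j ∈ S.erase k, (1 - a j * (1 - p j) ^ n) := by linarith
      _ ≤ ∏ j ∈ S, (1 - a j * (1 - p j) ^ n * (1 - p j)) := hstep
      _ = ∏ j ∈ S, (1 - a j * (1 - p j) ^ (n + 1)) := by
          exact Finset.prod_congr rfl fun j _ => by rw [pow_succ]; ring

end Aux

lemma C0_lb : ∀ b ∈ ((fun x : ℝ => 2 / (x * (1 - x) * Real.log (1/x))) ''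
    Set.Ioo (0:ℝ) (1/2)), 2 ≤ b := by
  rintro b ⟨y, ⟨hy0, hy2⟩, rfl⟩
  have hy1 : y < 1 := by linarith
  have hinv : 1 < 1/y := by rw [lt_div_iff₀ hy0]; linarith
  have hlogpos : 0 < Real.log (1/y) := Real.log_pos hinv
  have hDpos : 0 < y * (1 - y) * Real.log (1/y) := by
    apply mul_pos (mul_pos hy0 (by linarith)) hlogpos
  have hlogle : Real.log (1/y) ≤ 1/y - 1 :=
    Real.log_le_sub_one_of_pos (by positivity)
  have hyy : y * (1/y) = 1 := mul_one_div_cancel hy0.ne'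
  have hD1 : y * (1 - y) * Real.log (1/y) ≤ 1 := by
    have hstep : y * (1 - y) * Real.log (1/y) ≤ y * (1 - y) * (1/y - 1) :=
      mul_le_mul_of_nonneg_left hlogle (by nlinarith)
    have hexpand : y * (1 - y) * (1/y - 1) = (1 - y)^2 := by
      field_simp
    nlinarith
  rw [le_div_iff₀ hDpos]
  linarith

lemma per_term {C₀ : ℝ}
    (hC₀le : ∀ y : ℝ, y ∈ Set.Ioo (0:ℝ) (1/2) →
      C₀ ≤ 2 / (y * (1 - y) * Real.log (1/y)))
    (hC₀2 : 2 ≤ C₀) {n : ℕ} (hn : 1 ≤ n) {x : ℝ} (hx0 : 0 ≤ x) (hx1 : x ≤ 1)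
    {L : ℝ} (hL : 0 ≤ L) :
    1 - (1 - Real.exp (-(L * x))) * (1 - x) ^ n
      ≤ Real.exp (-(L * (x * (1 - x) ^ n)) + L ^ 2 * x / (C₀ * n)) := by
  set q : ℝ := (1 - x) ^ n with hqdef
  have hq0 : 0 ≤ q := pow_nonneg (by linarith) n
  have hq1 : q ≤ 1 := pow_le_one₀ (by linarith) (by linarith)
  have hnpos : (0:ℝ) < n := by exact_mod_cast hn
  have hCn : (0:ℝ) < C₀ * n := by nlinarith
  -- the log comparison (used in two cases)
  have hxlt1_of_qpos : 0 < q → x < 1 := by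
    intro hq
    by_contra h
    push_neg at h
    have hx : x = 1 := le_antisymm hx1 h
    have : q = 0 := by rw [hqdef, hx]; simp [zero_pow (by omega : n ≠ 0)]
    linarith
  have hnx_le : 0 < q → (n:ℝ) * x ≤ -Real.log q := by
    intro hq
    have hx1' : x < 1 := hxlt1_of_qpos hq
    have h1x : (0:ℝ) < 1 - x := by linarith
    have hlog1 : Real.log (1 - x) ≤ -x := by
      have := Real.log_le_sub_one_of_pos h1x; linarith
    have hlogq : Real.log q = (n:ℝ) * Real.log (1 - x) := by
      rw [hqdef, Real.log_pow]
    rw [hlogq]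
    nlinarith
  -- choose c
  obtain ⟨c, hc, hkey⟩ : ∃ c : ℝ, (∀ u, 0 ≤ u → u ≤ q → u * (1 - u) ≤ c) ∧
      C₀ * n * (c * x) ≤ 2 := by
    by_cases hhalf : 1/2 ≤ q
    · refine ⟨1/4, fun u hu0 huq => by nlinarith [sq_nonneg (1 - 2*u)], ?_⟩
      have hqpos : 0 < q := by linarith
      have hnx := hnx_le hqpos
      have hlq : -Real.log q ≤ Real.log 2 := by
        have h := Real.log_le_log (by norm_num : (0:ℝ) < 1/2) hhalf
        rw [show (1:ℝ)/2 = 2⁻¹ by norm_num, Real.log_inv] at h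
        linarith
      have hlog2pos : 0 < Real.log 2 := Real.log_pos (by norm_num)
      have hC : C₀ ≤ 16 / (3 * Real.log 2) := by
        have h := hC₀le (1/4) (by norm_num)
        have h4 : Real.log (1/(1/4 : ℝ)) = 2 * Real.log 2 := by
          norm_num
          rw [show (4:ℝ) = 2^(2:ℕ) by norm_num, Real.log_pow]
          norm_num
        rw [h4] at h
        calc C₀ ≤ 2 / (1/4 * (1 - 1/4) * (2 * Real.log 2)) := h
          _ = 16 / (3 * Real.log 2) := by field_simp; ring
      have hnx2 : (n:ℝ) * x ≤ Real.log 2 := le_trans hnx hlq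
      have hmul : C₀ * ((n:ℝ) * x) ≤ (16 / (3 * Real.log 2)) * Real.log 2 := by
        apply mul_le_mul hC hnx2 (mul_nonneg hnpos.le hx0) (by positivity)
      have h163 : (16 / (3 * Real.log 2)) * Real.log 2 = 16/3 := by
        field_simp
      rw [h163] at hmul
      nlinarith
    · push_neg at hhalf
      rcases eq_or_lt_of_le hq0 with hq | hqpos
      · refine ⟨0, fun u hu0 huq => ?_, by nlinarith⟩
        have : u = 0 := le_antisymm (by rw [← hq] at huq; exact huq) hu0
        simp [this]
      · refine ⟨q * (1 - q), fun u hu0 huq => ?_, ?_⟩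
        · nlinarith [mul_nonneg (sub_nonneg.2 huq) (by linarith : (0:ℝ) ≤ 1 - q - u)]
        · have hnx := hnx_le hqpos
          have hinvq : Real.log (1/q) = -Real.log q := by
            rw [one_div, Real.log_inv]
          have hlogqpos : 0 < Real.log (1/q) := by
            apply Real.log_pos
            rw [lt_div_iff₀ hqpos]; linarith
          have hq' := hC₀le q ⟨hqpos, hhalf⟩
          have hDpos : 0 < q * (1 - q) * Real.log (1/q) := by
            apply mul_pos (mul_pos hqpos (by linarith)) hlogqpos
          have h2 : C₀ * (q * (1 - q) * Real.log (1/q)) ≤ 2 := by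
            rw [le_div_iff₀ hDpos] at hq'
            linarith
          have h3 : (n:ℝ) * x ≤ Real.log (1/q) := by rw [hinvq]; exact hnx
          have hC0nn : 0 ≤ C₀ * (q * (1-q)) := by nlinarith
          calc C₀ * n * (q * (1 - q) * x) = C₀ * (q * (1-q)) * ((n:ℝ) * x) := by ring
            _ ≤ C₀ * (q * (1-q)) * Real.log (1/q) := by
                exact mul_le_mul_of_nonneg_left h3 hC0nn
            _ = C₀ * (q * (1 - q) * Real.log (1/q)) := by ring
            _ ≤ 2 := h2
  -- apply mgf_bound
  have ht : 0 ≤ L * x := mul_nonneg hL hx0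
  have hmgf := mgf_bound hq0 hq1 hc ht
  have hLHS : 1 - (1 - Real.exp (-(L * x))) * q = 1 - q + q * Real.exp (-(L * x)) := by ring
  rw [hLHS]
  apply le_trans hmgf
  apply Real.exp_le_exp.mpr
  have he1 : q * (L * x) = L * (x * q) := by ring
  rw [he1]
  have hcx : c * x ≤ 2 / (C₀ * n) := by
    rw [le_div_iff₀ hCn]
    linarith [hkey]
  have hfrac : c * (L * x) ^ 2 / 2 ≤ L ^ 2 * x / (C₀ * n) := by
    have h5 : (c * x) * (x * L ^ 2 / 2) ≤ (2 / (C₀ * n)) * (x * L ^ 2 / 2) :=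
      mul_le_mul_of_nonneg_right hcx
        (by
          have : (0:ℝ) ≤ x * L ^ 2 := mul_nonneg hx0 (sq_nonneg L)
          linarith)
    calc c * (L * x) ^ 2 / 2 = (c * x) * (x * L ^ 2 / 2) := by ring
      _ ≤ (2 / (C₀ * n)) * (x * L ^ 2 / 2) := h5
      _ = L ^ 2 * x / (C₀ * n) := by field_simp
  exact add_le_add_right hfrac _


/-- Missing mass, lower tail: if `X₁,…,Xₙ` are i.i.d. with `P(Xᵢ = j) = p_j`,
`U_n = ∑_j p_j · 1{j ∉ {X₁,…,Xₙ}}`, and `C₀ = inf_{0<x<1/2} 2/(x(1-x) log(1/x))`,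
then `P(U_n < E U_n − ε) ≤ exp(-C₀ n ε²/4)`. -/
theorem missing_mass_lower_tail
    {Ω : Type*} [MeasurableSpace Ω] (μ : Measure Ω) [IsProbabilityMeasure μ]
    (p : ℕ → ℝ) (hp : ∀ j, 0 ≤ p j) (hsum : ∑' j, p j = 1)
    (n : ℕ) (hn : 1 ≤ n)
    (X : Fin n → Ω → ℕ) (hmeas : ∀ i, Measurable (X i))
    (hindep : iIndepFun X μ)
    (hdist : ∀ i j, μ {ω | X i ω = j} = ENNReal.ofReal (p j))
    (C₀ : ℝ)
    (hC₀ : C₀ = sInf ((fun x : ℝ => 2 / (x * (1 - x) * Real.log (1/x))) ''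
      Set.Ioo (0:ℝ) (1/2)))
    (ε : ℝ) (hε : 0 < ε) :
    μ {ω | (∑' j, p j * (if ∀ i, X i ω ≠ j then (1:ℝ) else 0))
        < (∫ ω, (∑' j, p j * (if ∀ i, X i ω ≠ j then (1:ℝ) else 0)) ∂μ) - ε}
      ≤ ENNReal.ofReal (Real.exp (-C₀ * n * ε^2 / 4)) := by
  classical
  -- C₀ facts
  have hbdd : BddBelow ((fun x : ℝ => 2 / (x * (1 - x) * Real.log (1/x))) ''
      Set.Ioo (0:ℝ) (1/2)) := ⟨2, fun b hb => C0_lb b hb⟩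
  have hC₀le : ∀ y : ℝ, y ∈ Set.Ioo (0:ℝ) (1/2) →
      C₀ ≤ 2 / (y * (1 - y) * Real.log (1/y)) := by
    intro y hy
    rw [hC₀]
    exact csInf_le hbdd ⟨y, hy, rfl⟩
  have hC₀2 : 2 ≤ C₀ := by
    rw [hC₀]
    exact le_csInf ⟨_, Set.mem_image_of_mem _
      (by constructor <;> norm_num : (1/4:ℝ) ∈ Set.Ioo (0:ℝ) (1/2))⟩ C0_lb
  have hnpos : (0:ℝ) < n := by exact_mod_cast hn
  have hCn : (0:ℝ) < C₀ * n := by nlinarith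
  -- basic p facts
  have hpsum : Summable p := by
    by_contra h
    rw [tsum_eq_zero_of_not_summable h] at hsum
    norm_num at hsum
  have hσfin : ∀ S : Finset ℕ, ∑ j ∈ S, p j ≤ 1 := by
    intro S
    rw [← hsum]
    exact Summable.sum_le_tsum S (fun j _ => hp j) hpsum
  have hp1 : ∀ j, p j ≤ 1 := by
    intro j
    have := hσfin {j}
    simpa using this
  -- Z and E
  set Z : ℕ → Ω → ℝ := fun j ω => if ∀ i, X i ω ≠ j then 1 else 0 with hZdef
  have hZ0 : ∀ j ω, 0 ≤ Z j ω := by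
    intro j ω; simp only [hZdef]; split_ifs <;> norm_num
  have hZ1 : ∀ j ω, Z j ω ≤ 1 := by
    intro j ω; simp only [hZdef]; split_ifs <;> norm_num
  set E : Finset ℕ → Set Ω := fun T => {ω | ∀ i, X i ω ∉ T} with hEdef
  have hEeq : ∀ T : Finset ℕ, E T = ⋂ i, X i ⁻¹' ((↑T : Set ℕ)ᶜ) := by
    intro T
    ext ω
    simp [hEdef, Set.mem_iInter]
  have hEmeas : ∀ T : Finset ℕ, MeasurableSet (E T) := by
    intro T
    rw [hEeq]
    exact MeasurableSet.iInter fun i => (hmeas i) (T.measurableSet.compl)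
  have hXT : ∀ (i : Fin n) (T : Finset ℕ),
      μ (X i ⁻¹' (↑T : Set ℕ)) = ENNReal.ofReal (∑ j ∈ T, p j) := by
    intro i T
    have hun : (X i ⁻¹' (↑T : Set ℕ)) = ⋃ j ∈ T, X i ⁻¹' {j} := by
      ext ω; simp
    rw [hun, measure_biUnion_finset ?hd ?hm]
    · have hterm : ∀ j ∈ T, μ (X i ⁻¹' {j}) = ENNReal.ofReal (p j) := by
        intro j _
        have hxx : X i ⁻¹' {j} = {ω | X i ω = j} := by ext ω; simp
        rw [hxx]; exact hdist i j
      rw [Finset.sum_congr rfl hterm, ← ENNReal.ofReal_sum_of_nonneg (fun j _ => hp j)]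
    case hd =>
      intro j _ k _ hjk
      exact Disjoint.preimage _ (by simp [hjk])
    case hm =>
      intro j _
      exact (hmeas i) (measurableSet_singleton j)
  have hμE : ∀ T : Finset ℕ, μ (E T) = ENNReal.ofReal ((1 - ∑ j ∈ T, p j) ^ n) := by
    intro T
    rw [hEeq]
    rw [hindep.meas_iInter (fun i => ⟨(↑T : Set ℕ)ᶜ, T.measurableSet.compl, rfl⟩)]
    have hone : ∀ i : Fin n, μ (X i ⁻¹' ((↑T : Set ℕ)ᶜ)) = ENNReal.ofReal (1 - ∑ j ∈ T, p j) := by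
      intro i
      rw [Set.preimage_compl, measure_compl ((hmeas i) T.measurableSet) (measure_ne_top μ _)]
      rw [hXT i T, measure_univ]
      rw [← ENNReal.ofReal_one, ← ENNReal.ofReal_sub _ (Finset.sum_nonneg fun j _ => hp j)]
    rw [Finset.prod_congr rfl (fun i _ => hone i), Finset.prod_const]
    rw [← ENNReal.ofReal_pow (by linarith [hσfin T])]
    congr 1
    simp
  have hprodZ : ∀ (T : Finset ℕ) (ω : Ω),
      (∏ j ∈ T, Z j ω) = Set.indicator (E T) (fun _ => (1:ℝ)) ω := by
    intro T ω
    by_cases hω : ω ∈ E T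
    · rw [Set.indicator_of_mem hω]
      apply Finset.prod_eq_one
      intro j hj
      have : ∀ i, X i ω ≠ j := fun i h => hω i (h ▸ hj)
      simp [hZdef, this]
    · rw [Set.indicator_of_notMem hω]
      simp only [hEdef, Set.mem_setOf_eq, not_forall] at hω
      obtain ⟨i, hi⟩ := hω
      rw [not_not] at hi
      apply Finset.prod_eq_zero hi
      have : ¬(∀ i', X i' ω ≠ X i ω) := fun h => h i rfl
      simp [hZdef, this]
  have hIntProd : ∀ T : Finset ℕ,
      ∫ ω, (∏ j ∈ T, Z j ω) ∂μ = (1 - ∑ j ∈ T, p j) ^ n := by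
    intro T
    rw [integral_congr_ae (Filter.Eventually.of_forall (hprodZ T))]
    rw [integral_indicator_const (1:ℝ) (hEmeas T), measureReal_def, hμE T]
    rw [ENNReal.toReal_ofReal (pow_nonneg (by linarith [hσfin T]) n)]
    simp
  have hZmeas : ∀ j, Measurable (Z j) := by
    intro j
    have hset : MeasurableSet {ω | ∀ i, X i ω ≠ j} := by
      have : {ω | ∀ i, X i ω ≠ j} = E {j} := by
        ext ω; simp [hEdef]
      rw [this]; exact hEmeas {j}
    exact Measurable.ite hset measurable_const measurable_const
  -- U
  set U : Ω → ℝ := fun ω => ∑' j, p j * Z j ω with hUdef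
  have hZsummable : ∀ ω, Summable (fun j => p j * Z j ω) := by
    intro ω
    apply Summable.of_nonneg_of_le (fun j => mul_nonneg (hp j) (hZ0 j ω))
      (fun j => ?_) hpsum
    calc p j * Z j ω ≤ p j * 1 := mul_le_mul_of_nonneg_left (hZ1 j ω) (hp j)
      _ = p j := mul_one _
  have hUmeas : Measurable U := by
    apply measurable_of_tendsto_metrizable
      (f := fun N ω => ∑ j ∈ Finset.range N, p j * Z j ω)
    · intro N
      exact Finset.measurable_sum _ (fun j _ => (hZmeas j).const_mul (p j))
    · rw [tendsto_pi_nhds]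
      intro ω
      exact (hZsummable ω).hasSum.tendsto_sum_nat
  have hU0 : ∀ ω, 0 ≤ U ω := fun ω => tsum_nonneg (fun j => mul_nonneg (hp j) (hZ0 j ω))
  have hU1 : ∀ ω, U ω ≤ 1 := by
    intro ω
    rw [hUdef, ← hsum]
    exact Summable.tsum_le_tsum (fun j => by
      calc p j * Z j ω ≤ p j * 1 := mul_le_mul_of_nonneg_left (hZ1 j ω) (hp j)
        _ = p j := mul_one _) (hZsummable ω) hpsum
  have hUint : Integrable U μ := by
    apply Integrable.mono' (integrable_const (1:ℝ)) hUmeas.aestronglyMeasurable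
    apply Filter.Eventually.of_forall
    intro ω
    rw [Real.norm_of_nonneg (hU0 ω)]
    exact hU1 ω
  -- mean
  set M : ℝ := ∑' j, p j * (1 - p j) ^ n with hMdef
  have hsummANDq : Summable (fun j => p j * (1 - p j) ^ n) := by
    apply Summable.of_nonneg_of_le
      (fun j => mul_nonneg (hp j) (pow_nonneg (by linarith [hp1 j]) n))
      (fun j => ?_) hpsum
    calc p j * (1 - p j) ^ n ≤ p j * 1 :=
        mul_le_mul_of_nonneg_left (pow_le_one₀ (by linarith [hp1 j]) (by linarith [hp j])) (hp j)
      _ = p j := mul_one _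
  have hintZj : ∀ j, ∫ ω, p j * Z j ω ∂μ = p j * (1 - p j) ^ n := by
    intro j
    rw [integral_const_mul]
    have := hIntProd {j}
    simp only [Finset.prod_singleton, Finset.sum_singleton] at this
    rw [this]
  have hEU : ∫ ω, U ω ∂μ = M := by
    rw [hUdef, hMdef]
    rw [integral_tsum (fun j => ((hZmeas j).const_mul (p j)).aestronglyMeasurable) ?hsum]
    · exact tsum_congr hintZj
    case hsum =>
      apply ne_top_of_le_ne_top (b := ∑' j, ENNReal.ofReal (p j))
      · rw [← ENNReal.ofReal_tsum_of_nonneg hp hpsum, hsum]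
        simp
      · apply ENNReal.tsum_le_tsum
        intro j
        calc ∫⁻ ω, ‖p j * Z j ω‖₊ ∂μ ≤ ∫⁻ _, ENNReal.ofReal (p j) ∂μ := by
              apply lintegral_mono
              intro ω
              rcases (show Z j ω = 0 ∨ Z j ω = 1 by
                simp only [hZdef]; split_ifs <;> simp) with h | h
              · simp [h]
              · simp [h, ← Real.enorm_eq_ofReal (hp j)]
          _ = ENNReal.ofReal (p j) := by
              rw [lintegral_const, measure_univ, mul_one]
  -- the exponential parameter
  set L : ℝ := C₀ * n * ε / 2 with hLdef
  have hL0 : 0 ≤ L := by positivity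
  set a : ℕ → ℝ := fun j => 1 - Real.exp (-(L * p j)) with hadef
  have ha0 : ∀ j, 0 ≤ a j := by
    intro j
    have : Real.exp (-(L * p j)) ≤ 1 := Real.exp_le_one_iff.mpr (by
      have : 0 ≤ L * p j := mul_nonneg hL0 (hp j)
      linarith)
    simp only [hadef]; linarith
  have ha1 : ∀ j, a j ≤ 1 := by
    intro j
    have := Real.exp_pos (-(L * p j))
    simp only [hadef]; linarith
  -- pieces of the chain
  have hexpmeas : Measurable (fun ω => Real.exp (-(L * U ω))) :=
    Real.measurable_exp.comp ((hUmeas.const_mul L).neg)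
  have hexpint : Integrable (fun ω => Real.exp (-(L * U ω))) μ := by
    apply Integrable.mono' (integrable_const (1:ℝ)) hexpmeas.aestronglyMeasurable
    apply Filter.Eventually.of_forall
    intro ω
    rw [Real.norm_of_nonneg (Real.exp_nonneg _)]
    apply Real.exp_le_one_iff.mpr
    have : 0 ≤ L * U ω := mul_nonneg hL0 (hU0 ω)
    linarith
  -- step: for any finset S, ∫ exp(-(L U)) ≤ exp(-(L mS) + L²/(C₀ n))
  have hchain : ∀ S : Finset ℕ, ∫ ω, Real.exp (-(L * U ω)) ∂μ
      ≤ Real.exp (-(L * ∑ j ∈ S, p j * (1 - p j) ^ n) + L^2 / (C₀ * n)) := by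
    intro S
    have hfacnn : ∀ ω, ∀ j ∈ S, (0:ℝ) ≤ 1 - a j * Z j ω := by
      intro ω j _
      have h1 := ha0 j; have h2 := ha1 j; have h3 := hZ0 j ω; have h4 := hZ1 j ω
      nlinarith
    have hprodmeas : Measurable (fun ω => ∏ j ∈ S, (1 - a j * Z j ω)) := by
      apply Finset.measurable_prod
      intro j _
      exact (measurable_const.sub ((hZmeas j).const_mul (a j)))
    have hprodint : Integrable (fun ω => ∏ j ∈ S, (1 - a j * Z j ω)) μ := by
      apply Integrable.mono' (integrable_const (1:ℝ)) hprodmeas.aestronglyMeasurable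
      apply Filter.Eventually.of_forall
      intro ω
      rw [Real.norm_of_nonneg (Finset.prod_nonneg (hfacnn ω))]
      apply Finset.prod_le_one (hfacnn ω)
      intro j _
      have h1 := ha0 j; have h3 := hZ0 j ω
      nlinarith
    have hpw : ∀ ω, Real.exp (-(L * U ω)) ≤ ∏ j ∈ S, (1 - a j * Z j ω) := by
      intro ω
      have hfac : ∀ j ∈ S, (1 : ℝ) - a j * Z j ω = Real.exp (-(L * (p j * Z j ω))) := by
        intro j _
        simp only [hZdef, hadef]
        split_ifs with h
        · simp
        · simp
      rw [Finset.prod_congr rfl hfac, ← Real.exp_sum]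
      apply Real.exp_le_exp.mpr
      have hsum' : ∑ j ∈ S, -(L * (p j * Z j ω)) = -(L * ∑ j ∈ S, p j * Z j ω) := by
        rw [Finset.sum_neg_distrib, ← Finset.mul_sum]
      rw [hsum']
      apply neg_le_neg
      apply mul_le_mul_of_nonneg_left _ hL0
      exact Summable.sum_le_tsum S (fun j _ => mul_nonneg (hp j) (hZ0 j ω)) (hZsummable ω)
    have h1 : ∫ ω, Real.exp (-(L * U ω)) ∂μ ≤ ∫ ω, ∏ j ∈ S, (1 - a j * Z j ω) ∂μ :=
      integral_mono hexpint hprodint hpw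
    -- expansion
    have hpt : ∀ ω, ∏ j ∈ S, (1 - a j * Z j ω)
        = ∑ T ∈ S.powerset, (∏ j ∈ T, (-a j)) * ∏ j ∈ T, Z j ω := by
      intro ω
      calc ∏ j ∈ S, (1 - a j * Z j ω) = ∏ j ∈ S, ((-(a j)) * Z j ω + 1) := by
            exact Finset.prod_congr rfl fun j _ => by ring
        _ = ∑ T ∈ S.powerset, (∏ j ∈ T, (-(a j)) * Z j ω) * ∏ j ∈ S \ T, (1:ℝ) :=
            Finset.prod_add _ _ _
        _ = ∑ T ∈ S.powerset, (∏ j ∈ T, (-a j)) * ∏ j ∈ T, Z j ω := by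
            apply Finset.sum_congr rfl
            intro T _
            rw [Finset.prod_const_one, mul_one, Finset.prod_mul_distrib]
    have h2 : ∫ ω, ∏ j ∈ S, (1 - a j * Z j ω) ∂μ
        = ∑ T ∈ S.powerset, (∏ j ∈ T, (-a j)) * (1 - ∑ j ∈ T, p j) ^ n := by
      rw [integral_congr_ae (Filter.Eventually.of_forall hpt)]
      rw [integral_finset_sum]
      · apply Finset.sum_congr rfl
        intro T _
        rw [integral_const_mul, hIntProd T]
      · intro T _
        apply Integrable.const_mul
        rw [show (fun ω => ∏ j ∈ T, Z j ω) = fun ω => Set.indicator (E T) (fun _ => (1:ℝ)) ω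
          from funext (hprodZ T)]
        exact (integrable_const (1:ℝ)).indicator (hEmeas T)
    have h3 := FF_bound p a hp hp1 hσfin ha0 ha1 n S
    have h4 : ∏ j ∈ S, (1 - a j * (1 - p j) ^ n)
        ≤ ∏ j ∈ S, Real.exp (-(L * (p j * (1 - p j) ^ n)) + L^2 * p j / (C₀ * n)) := by
      apply Finset.prod_le_prod
      · intro j _
        have h5 := ha0 j; have h6 := ha1 j
        have h7 : (0:ℝ) ≤ (1 - p j)^n := pow_nonneg (by linarith [hp1 j]) n
        have h8 : (1 - p j)^n ≤ 1 := pow_le_one₀ (by linarith [hp1 j]) (by linarith [hp j])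
        nlinarith
      · intro j _
        exact per_term hC₀le hC₀2 hn (hp j) (hp1 j) hL0
    have h5 : ∏ j ∈ S, Real.exp (-(L * (p j * (1 - p j) ^ n)) + L^2 * p j / (C₀ * n))
        ≤ Real.exp (-(L * ∑ j ∈ S, p j * (1 - p j) ^ n) + L^2 / (C₀ * n)) := by
      rw [← Real.exp_sum]
      apply Real.exp_le_exp.mpr
      rw [Finset.sum_add_distrib, Finset.sum_neg_distrib, ← Finset.mul_sum]
      have hterm2 : ∑ j ∈ S, L^2 * p j / (C₀ * n) ≤ L^2 / (C₀ * n) := by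
        have heq2 : ∑ j ∈ S, L^2 * p j / (C₀ * n) = (L^2 / (C₀ * n)) * ∑ j ∈ S, p j := by
          rw [Finset.mul_sum]
          exact Finset.sum_congr rfl fun j _ => by ring
        rw [heq2]
        calc (L^2 / (C₀ * n)) * ∑ j ∈ S, p j ≤ (L^2 / (C₀ * n)) * 1 :=
            mul_le_mul_of_nonneg_left (hσfin S) (by positivity)
          _ = L^2 / (C₀ * n) := mul_one _
      exact add_le_add_right hterm2 _
    calc ∫ ω, Real.exp (-(L * U ω)) ∂μ ≤ ∫ ω, ∏ j ∈ S, (1 - a j * Z j ω) ∂μ := h1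
      _ = ∑ T ∈ S.powerset, (∏ j ∈ T, (-a j)) * (1 - ∑ j ∈ T, p j) ^ n := h2
      _ ≤ ∏ j ∈ S, (1 - a j * (1 - p j) ^ n) := h3
      _ ≤ ∏ j ∈ S, Real.exp (-(L * (p j * (1 - p j) ^ n)) + L^2 * p j / (C₀ * n)) := h4
      _ ≤ _ := h5
  -- limit over S = range N
  have hMGF : ∫ ω, Real.exp (-(L * U ω)) ∂μ ≤ Real.exp (-(L * M) + L^2 / (C₀ * n)) := by
    have hts : Filter.Tendsto (fun N => ∑ j ∈ Finset.range N, p j * (1 - p j) ^ n)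
        Filter.atTop (nhds M) := hsummANDq.hasSum.tendsto_sum_nat
    have htt : Filter.Tendsto
        (fun N => Real.exp (-(L * ∑ j ∈ Finset.range N, p j * (1 - p j) ^ n) + L^2 / (C₀ * n)))
        Filter.atTop (nhds (Real.exp (-(L * M) + L^2 / (C₀ * n)))) := by
      apply Filter.Tendsto.comp (Real.continuous_exp.tendsto _)
      exact ((Filter.Tendsto.const_mul L hts).neg).add_const (L^2 / (C₀ * n))
    exact ge_of_tendsto htt (Filter.Eventually.of_forall fun N => hchain (Finset.range N))
  -- Markov
  set r : ℝ := Real.exp (-(L * (M - ε))) with hrdef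
  have hrpos : 0 < r := Real.exp_pos _
  have hsub : {ω | U ω < M - ε} ⊆ {ω | r ≤ Real.exp (-(L * U ω))} := by
    intro ω hω
    simp only [Set.mem_setOf_eq] at hω ⊢
    rw [hrdef]
    apply Real.exp_le_exp.mpr
    have := mul_le_mul_of_nonneg_left (le_of_lt hω) hL0
    linarith
  have hmark := mul_meas_ge_le_integral_of_nonneg
    (Filter.Eventually.of_forall fun ω => Real.exp_nonneg (-(L * U ω))) hexpint r
  have hμmono : (μ {ω | U ω < M - ε}).toReal ≤ (μ {ω | r ≤ Real.exp (-(L * U ω))}).toReal :=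
    ENNReal.toReal_mono (measure_ne_top μ _) (measure_mono hsub)
  have hfinal : (μ {ω | U ω < M - ε}).toReal ≤ Real.exp (-C₀ * n * ε^2 / 4) := by
    have h6 : (μ {ω | r ≤ Real.exp (-(L * U ω))}).toReal
        ≤ Real.exp (-(L * M) + L^2 / (C₀ * n)) / r := by
      rw [le_div_iff₀ hrpos]
      calc (μ {ω | r ≤ Real.exp (-(L * U ω))}).toReal * r
          = r * (μ {ω | r ≤ Real.exp (-(L * U ω))}).toReal := mul_comm _ _
        _ ≤ ∫ ω, Real.exp (-(L * U ω)) ∂μ := hmark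
        _ ≤ _ := hMGF
    have h7 : Real.exp (-(L * M) + L^2 / (C₀ * n)) / r = Real.exp (-C₀ * n * ε^2 / 4) := by
      rw [hrdef, ← Real.exp_sub]
      congr 1
      have hCn' : C₀ * (n:ℝ) ≠ 0 := ne_of_gt hCn
      rw [hLdef]
      field_simp
      ring
    calc (μ {ω | U ω < M - ε}).toReal ≤ _ := hμmono
      _ ≤ _ := h6
      _ = _ := h7
  have hgoal2 : μ {ω | U ω < (∫ ω, U ω ∂μ) - ε} ≤ ENNReal.ofReal (Real.exp (-C₀ * n * ε^2 / 4)) := by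
    rw [hEU]
    exact (ENNReal.le_ofReal_iff_toReal_le (measure_ne_top μ _) (Real.exp_nonneg _)).mpr hfinal
  exact hgoal2
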